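/- (Conservation law for Ỹ, general f.) Let f : ℝ → ℝ be continuous and F : ℝ → ℝ differentiable with F′ = f. Let u be a C² solution of Δ_{H¹}u + f(u) = 0 on an open set Ω ⊆ ℝ³. Define on Ω: υ₁ = −4xy·u_t² − u_x·u_y − 2x·u_x·u_t − 2y·u_y·u_t, υ₂ = ½u_x² − ½u_y² + 2(3x² + y²)u_t² + 2y·u_x·u_t − 2x·u_y·u_t − F(u), υ₃ = x·u_x² + 3x·u_y² − 4x(x²+y²)u_t² − 2y·u_x·u_y − 4(x²+y²)u_y·u_t − 2x·F(u). Then ∂υ₁/∂x + ∂υ₂/∂y + ∂υ₃/∂t = 0 at every point of Ω. -/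

import Mathlib

/-- Partial derivative with respect to the first coordinate (x). -/
noncomputable def pdx (u : ℝ × ℝ × ℝ → ℝ) : ℝ × ℝ × ℝ → ℝ :=
  fun p => fderiv ℝ u p (1, 0, 0)

/-- Partial derivative with respect to the second coordinate (y). -/
noncomputable def pdy (u : ℝ × ℝ × ℝ → ℝ) : ℝ × ℝ × ℝ → ℝ :=
  fun p => fderiv ℝ u p (0, 1, 0)

/-- Partial derivative with respect to the third coordinate (t). -/
noncomputable def pdt (u : ℝ × ℝ × ℝ → ℝ) : ℝ × ℝ × ℝ → ℝ :=
  fun p => fderiv ℝ u p (0, 0, 1)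

/-- The Kohn–Laplace operator on the Heisenberg group H¹:
`Δ u = u_xx + u_yy + 4(x²+y²) u_tt + 4y u_xt − 4x u_yt`. -/
noncomputable def KohnLaplace (u : ℝ × ℝ × ℝ → ℝ) : ℝ × ℝ × ℝ → ℝ :=
  fun p => pdx (pdx u) p + pdy (pdy u) p
    + 4 * (p.1 ^ 2 + p.2.1 ^ 2) * pdt (pdt u) p
    + 4 * p.2.1 * pdt (pdx u) p - 4 * p.1 * pdt (pdy u) p

/-- conservation law for the Noether symmetry Ỹ, general f:
for a C² solution of Δ_{H¹}u + f(u) = 0 on an open set Ω, Div(υ) = 0 with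
υ₁ = −4xy u_t² − u_x u_y − 2x u_x u_t − 2y u_y u_t,
υ₂ = ½u_x² − ½u_y² + 2(3x²+y²)u_t² + 2y u_x u_t − 2x u_y u_t − F(u),
υ₃ = x u_x² + 3x u_y² − 4x(x²+y²)u_t² − 2y u_x u_y − 4(x²+y²)u_y u_t − 2x F(u). -/
theorem conservation_law_Ytilde
    (f F : ℝ → ℝ) (hf : Continuous f) (hF : ∀ s, HasDerivAt F (f s) s)
    (Ω : Set (ℝ × ℝ × ℝ)) (hΩ : IsOpen Ω)
    (u : ℝ × ℝ × ℝ → ℝ) (hu : ContDiffOn ℝ 2 u Ω)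
    (hsol : ∀ p ∈ Ω, KohnLaplace u p + f (u p) = 0) :
    ∀ p ∈ Ω,
      pdx (fun q => -4 * q.1 * q.2.1 * (pdt u q) ^ 2 - pdx u q * pdy u q
          - 2 * q.1 * pdx u q * pdt u q - 2 * q.2.1 * pdy u q * pdt u q) p
      + pdy (fun q => (1 / 2) * (pdx u q) ^ 2 - (1 / 2) * (pdy u q) ^ 2
          + 2 * (3 * q.1 ^ 2 + q.2.1 ^ 2) * (pdt u q) ^ 2
          + 2 * q.2.1 * pdx u q * pdt u q - 2 * q.1 * pdy u q * pdt u q - F (u q)) p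
      + pdt (fun q => q.1 * (pdx u q) ^ 2 + 3 * q.1 * (pdy u q) ^ 2
          - 4 * q.1 * (q.1 ^ 2 + q.2.1 ^ 2) * (pdt u q) ^ 2
          - 2 * q.2.1 * pdx u q * pdy u q
          - 4 * (q.1 ^ 2 + q.2.1 ^ 2) * pdy u q * pdt u q - 2 * q.1 * F (u q)) p = 0 := by
  intro p hp
  have hu2 : ContDiffAt ℝ 2 u p := hu.contDiffAt (hΩ.mem_nhds hp)
  have hd1 : DifferentiableAt ℝ (fderiv ℝ u) p :=
    (hu2.fderiv_right (m := 1) le_rfl).differentiableAt one_ne_zero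
  have hB : HasFDerivAt (fderiv ℝ u) (fderiv ℝ (fderiv ℝ u) p) p := hd1.hasFDerivAt
  set B := fderiv ℝ (fderiv ℝ u) p with hBdef
  have hA : ∀ v : ℝ × ℝ × ℝ, HasFDerivAt (fun q => fderiv ℝ u q v)
      ((ContinuousLinearMap.apply ℝ ℝ v).comp B) p := fun v =>
    (ContinuousLinearMap.apply ℝ ℝ v).hasFDerivAt.comp p hB
  have hP : ∀ v : ℝ × ℝ × ℝ, HasFDerivAt (fun q => fderiv ℝ u q v ^ 2)
      (((2 : ℝ) * fderiv ℝ u p v) • ((ContinuousLinearMap.apply ℝ ℝ v).comp B)) p := by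
    intro v
    have := (hasDerivAt_pow 2 (fderiv ℝ u p v)).comp_hasFDerivAt p (hA v)
    simpa [Function.comp_def] using this
  have hsym : ∀ v w, B v w = B w v := hu2.isSymmSndFDerivAt (by simp)
  have hX : HasFDerivAt (fun q : ℝ × ℝ × ℝ => q.1)
      (ContinuousLinearMap.fst ℝ ℝ (ℝ × ℝ)) p := hasFDerivAt_fst
  have hY : HasFDerivAt (fun q : ℝ × ℝ × ℝ => q.2.1)
      ((ContinuousLinearMap.fst ℝ ℝ ℝ).comp (ContinuousLinearMap.snd ℝ ℝ (ℝ × ℝ))) p :=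
    hasFDerivAt_fst.comp p hasFDerivAt_snd
  have hX2 : HasFDerivAt (fun q : ℝ × ℝ × ℝ => q.1 ^ 2)
      (((2 : ℝ) * p.1) • ContinuousLinearMap.fst ℝ ℝ (ℝ × ℝ)) p := by
    have := (hasDerivAt_pow 2 p.1).comp_hasFDerivAt p hX
    simpa [Function.comp_def] using this
  have hY2 : HasFDerivAt (fun q : ℝ × ℝ × ℝ => q.2.1 ^ 2)
      (((2 : ℝ) * p.2.1) • ((ContinuousLinearMap.fst ℝ ℝ ℝ).comp (ContinuousLinearMap.snd ℝ ℝ (ℝ × ℝ)))) p := by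
    have := (hasDerivAt_pow 2 p.2.1).comp_hasFDerivAt p hY
    simpa [Function.comp_def] using this
  have hFu : HasFDerivAt (fun q => F (u q)) (f (u p) • fderiv ℝ u p) p :=
    (hF (u p)).comp_hasFDerivAt p (hu2.differentiableAt two_ne_zero).hasFDerivAt
  have h1 : HasFDerivAt (fun q : ℝ × ℝ × ℝ =>
      -4 * q.1 * q.2.1 * fderiv ℝ u q (0,0,1) ^ 2
      - fderiv ℝ u q (1,0,0) * fderiv ℝ u q (0,1,0)
      - 2 * q.1 * fderiv ℝ u q (1,0,0) * fderiv ℝ u q (0,0,1)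
      - 2 * q.2.1 * fderiv ℝ u q (0,1,0) * fderiv ℝ u q (0,0,1)) _ p :=
    (((((hX.const_mul (-4 : ℝ)).mul hY).mul (hP (0,0,1))).sub
      ((hA (1,0,0)).mul (hA (0,1,0)))).sub
      (((hX.const_mul (2 : ℝ)).mul (hA (1,0,0))).mul (hA (0,0,1)))).sub
      (((hY.const_mul (2 : ℝ)).mul (hA (0,1,0))).mul (hA (0,0,1)))
  have h2 : HasFDerivAt (fun q : ℝ × ℝ × ℝ =>
      1 / 2 * fderiv ℝ u q (1,0,0) ^ 2 - 1 / 2 * fderiv ℝ u q (0,1,0) ^ 2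
      + 2 * (3 * q.1 ^ 2 + q.2.1 ^ 2) * fderiv ℝ u q (0,0,1) ^ 2
      + 2 * q.2.1 * fderiv ℝ u q (1,0,0) * fderiv ℝ u q (0,0,1)
      - 2 * q.1 * fderiv ℝ u q (0,1,0) * fderiv ℝ u q (0,0,1) - F (u q)) _ p :=
    ((((((hP (1,0,0)).const_mul ((1:ℝ)/2)).sub
      ((hP (0,1,0)).const_mul ((1:ℝ)/2))).add
      ((((hX2.const_mul (3:ℝ)).add hY2).const_mul (2:ℝ)).mul (hP (0,0,1)))).add
      (((hY.const_mul (2:ℝ)).mul (hA (1,0,0))).mul (hA (0,0,1)))).sub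
      (((hX.const_mul (2:ℝ)).mul (hA (0,1,0))).mul (hA (0,0,1)))).sub hFu
  have h3 : HasFDerivAt (fun q : ℝ × ℝ × ℝ =>
      q.1 * fderiv ℝ u q (1,0,0) ^ 2 + 3 * q.1 * fderiv ℝ u q (0,1,0) ^ 2
      - 4 * q.1 * (q.1 ^ 2 + q.2.1 ^ 2) * fderiv ℝ u q (0,0,1) ^ 2
      - 2 * q.2.1 * fderiv ℝ u q (1,0,0) * fderiv ℝ u q (0,1,0)
      - 4 * (q.1 ^ 2 + q.2.1 ^ 2) * fderiv ℝ u q (0,1,0) * fderiv ℝ u q (0,0,1)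
      - 2 * q.1 * F (u q)) _ p :=
    (((((hX.mul (hP (1,0,0))).add
      ((hX.const_mul (3:ℝ)).mul (hP (0,1,0)))).sub
      (((hX.const_mul (4:ℝ)).mul (hX2.add hY2)).mul (hP (0,0,1)))).sub
      (((hY.const_mul (2:ℝ)).mul (hA (1,0,0))).mul (hA (0,1,0)))).sub
      ((((hX2.add hY2).const_mul (4:ℝ)).mul (hA (0,1,0))).mul (hA (0,0,1)))).sub
      ((hX.const_mul (2:ℝ)).mul hFu)
  have hPDE := hsol p hp
  have e1 : pdx u = fun q => fderiv ℝ u q (1,0,0) := rfl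
  have e2 : pdy u = fun q => fderiv ℝ u q (0,1,0) := rfl
  have e3 : pdt u = fun q => fderiv ℝ u q (0,0,1) := rfl
  simp only [KohnLaplace, pdx, pdy, pdt, e1, e2, e3] at hPDE ⊢
  rw [(hA (1,0,0)).fderiv, (hA (0,1,0)).fderiv, (hA (0,0,1)).fderiv] at hPDE
  rw [h1.fderiv, h2.fderiv, h3.fderiv]
  simp only [ContinuousLinearMap.comp_apply, ContinuousLinearMap.apply_apply,
    ContinuousLinearMap.add_apply, ContinuousLinearMap.sub_apply,
    ContinuousLinearMap.smul_apply, ContinuousLinearMap.coe_fst',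
    ContinuousLinearMap.coe_snd', smul_eq_mul, nsmul_eq_mul, Nat.cast_ofNat, Pi.mul_apply, Pi.add_apply] at hPDE ⊢
  simp only [hsym (0,1,0) (1,0,0), hsym (0,0,1) (1,0,0), hsym (0,0,1) (0,1,0)] at hPDE ⊢
  linear_combination (-(fderiv ℝ u p (0,1,0) + 2 * p.1 * fderiv ℝ u p (0,0,1))) * hPDE
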